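/- Let $p$ be an odd prime, $u$ a positive integer, and $s$ an integer not divisible by $p$. Define $U(s;u,p^r) := \sum_{k=0}^{u p^{r-1}-1} 1/(kp+s)$ for positive integers $r$. Then $U(s;u,p^2) \equiv p\,U(s;u,p) \pmod{p^2}$, and for every integer $r \ge 2$, $U(s;u,p^{r+1}) \equiv p\,U(s;u,p^r) \pmod{p^{r+2}}$. -/

import Mathlib

open Finset

/-- `U(s; u, p^r) = ∑_{k=0}^{u p^{r-1} - 1} 1/(kp + s)`. -/
def U (p : ℕ) (s : ℤ) (u r : ℕ) : ℚ :=
  ∑ k ∈ Finset.range (u * p ^ (r - 1)), 1 / ((k : ℚ) * (p : ℚ) + (s : ℚ))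

private lemma sum_range_mul_eq {M : Type*} [AddCommMonoid M] (f : ℕ → M) (a b : ℕ) :
    ∑ k ∈ Finset.range (a * b), f k
      = ∑ i ∈ Finset.range a, ∑ j ∈ Finset.range b, f (i * b + j) := by
  induction a with
  | zero => simp
  | succ a ih =>
      rw [Nat.succ_mul, Finset.sum_range_add, ih, Finset.sum_range_succ]

private lemma num_dvd_of_norm_le (p : ℕ) [hp : Fact p.Prime] (x : ℚ) (m : ℕ) (hm : 1 ≤ m)
    (h : padicNorm p x ≤ (p : ℚ) ^ (-(m : ℤ))) : (p : ℤ) ^ m ∣ x.num := by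
  have hp1 : (1 : ℚ) < p := by exact_mod_cast hp.out.one_lt
  have hplt : (p : ℚ) ^ (-(m : ℤ)) < 1 := by
    apply zpow_lt_one_of_neg₀ hp1 (by omega)
  rcases eq_or_ne x 0 with rfl | hx
  · simp
  have hnum0 : x.num ≠ 0 := Rat.num_ne_zero.2 hx
  have hden0 : (x.den : ℚ) ≠ 0 := by
    exact_mod_cast x.den_nz
  have hxeq : padicNorm p x = padicNorm p (x.num : ℚ) / padicNorm p (x.den : ℚ) := by
    conv_lhs => rw [← Rat.num_div_den x]
    rw [padicNorm.div]
  have hdend : ¬ (p ∣ x.den) := by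
    intro hdvd
    have hnd : ¬ ((p : ℤ) ∣ x.num) := by
      intro hnd
      have h1 : p ∣ x.num.natAbs := Int.natCast_dvd_natCast.1 (Int.dvd_natAbs.2 hnd)
      have h2 : p ∣ Nat.gcd x.num.natAbs x.den := Nat.dvd_gcd h1 hdvd
      rw [x.reduced] at h2
      exact hp.out.one_lt.ne' (Nat.dvd_one.1 h2)
    have h1 : padicNorm p (x.num : ℚ) = 1 := (padicNorm.int_eq_one_iff _).2 hnd
    have h2 : padicNorm p (x.den : ℚ) < 1 := (padicNorm.nat_lt_one_iff _).2 hdvd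
    have h3 : padicNorm p (x.den : ℚ) > 0 := lt_of_le_of_ne (padicNorm.nonneg _)
      (Ne.symm (padicNorm.nonzero (by exact_mod_cast x.den_nz)))
    have : (1 : ℚ) < padicNorm p x := by
      rw [hxeq, h1]
      rw [lt_div_iff₀ h3, one_mul]
      exact h2
    linarith [le_trans h hplt.le]
  have hden1 : padicNorm p (x.den : ℚ) = 1 := (padicNorm.nat_eq_one_iff _).2 hdend
  have : padicNorm p (x.num : ℚ) ≤ (p : ℚ) ^ (-(m : ℤ)) := by
    rw [hxeq, hden1, div_one] at h
    exact h
  have := (padicNorm.dvd_iff_norm_le (p := p) (n := m) (z := x.num)).2 this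
  exact_mod_cast this

private lemma key_congruence (p u : ℕ) (s : ℤ) (hp : p.Prime) (hpodd : Odd p) (hu : 0 < u)
    (hps : ¬ (p : ℤ) ∣ s) (r : ℕ) (hr : 1 ≤ r) :
    (p : ℤ) ^ (r + min r 2) ∣ (U p s u (r + 1) - (p : ℚ) * U p s u r).num := by
  haveI : Fact p.Prime := ⟨hp⟩
  have hp1 : (1 : ℚ) ≤ p := by exact_mod_cast hp.one_lt.le
  have hp0 : (p : ℚ) ≠ 0 := by positivity
  -- helper lemmas for norm arithmetic
  have hmul : ∀ (x y : ℚ) (a b : ℤ), padicNorm p x ≤ (p : ℚ) ^ (-a) →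
      padicNorm p y ≤ (p : ℚ) ^ (-b) → padicNorm p (x * y) ≤ (p : ℚ) ^ (-(a + b)) := by
    intro x y a b hx hy
    rw [padicNorm.mul, neg_add, zpow_add₀ hp0]
    exact mul_le_mul hx hy (padicNorm.nonneg _) (zpow_nonneg (by positivity) _)
  have hmono : ∀ a b : ℤ, a ≤ b → (p : ℚ) ^ (-b) ≤ (p : ℚ) ^ (-a) := by
    intro a b hab
    exact zpow_le_zpow_right₀ hp1 (neg_le_neg hab)
  set q : ℚ := (p : ℚ) with hqdef
  set n : ℕ := u * p ^ (r - 1) with hn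
  set c : ℚ := (n : ℚ) * q with hc
  set A : ℕ → ℚ := fun i => (i : ℚ) * q + (s : ℚ) with hAdef
  -- A k is a p-adic unit
  have hA : ∀ k : ℕ, padicNorm p (A k) = 1 := by
    intro k
    have he : A k = (((k : ℤ) * p + s : ℤ) : ℚ) := by
      simp only [hAdef]; push_cast; ring
    rw [he, padicNorm.int_eq_one_iff]
    intro hdvd
    have h2 := dvd_sub hdvd (Dvd.intro (k : ℤ) rfl)
    have h3 : (k : ℤ) * p + s - p * k = s := by ring
    rw [h3] at h2
    exact hps h2
  have hA0 : ∀ k : ℕ, A k ≠ 0 := by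
    intro k h
    have := hA k
    rw [h, padicNorm.zero] at this
    norm_num at this
  have hB : ∀ j i : ℕ, A (j * n + i) = A i + (j : ℚ) * c := by
    intro j i
    simp only [hAdef, hc]
    push_cast
    ring
  -- counting
  have hcount : u * p ^ ((r + 1) - 1) = p * n := by
    rw [hn]
    have h1 : r - 1 + 1 = r := Nat.sub_add_cancel hr
    have : p ^ r = p ^ (r - 1) * p := by rw [← pow_succ, h1]
    simp only [Nat.add_sub_cancel, this]
    ring
  -- rewrite the two sums
  have hU1 : U p s u (r + 1) = ∑ j ∈ range p, ∑ i ∈ range n, 1 / A (j * n + i) := by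
    rw [U, hcount, sum_range_mul_eq]
  have hU2 : q * U p s u r = ∑ j ∈ range p, ∑ i ∈ range n, 1 / A i := by
    rw [U, ← hn]
    rw [Finset.sum_const, card_range, nsmul_eq_mul]
  set G : ℚ := ∑ j ∈ range p, (j : ℚ) with hG
  set W : ℚ := ∑ i ∈ range n, 1 / (A i) ^ 2 with hW
  set Y : ℚ := ∑ j ∈ range p, ∑ i ∈ range n,
      (j : ℚ) ^ 2 * c ^ 2 / ((A i) ^ 2 * A (j * n + i)) with hY
  -- the basic algebraic identity, termwise
  have hterm : ∀ j i : ℕ, 1 / A (j * n + i) - 1 / A i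
      = -((j : ℚ) * (c * (1 / (A i) ^ 2)))
        + (j : ℚ) ^ 2 * c ^ 2 / ((A i) ^ 2 * A (j * n + i)) := by
    intro j i
    have h1 := hA0 i
    have h2 := hA0 (j * n + i)
    rw [hB j i] at h2 ⊢
    field_simp
    ring
  have hD : U p s u (r + 1) - q * U p s u r = -(G * (c * W)) + Y := by
    rw [hU1, hU2, ← Finset.sum_sub_distrib]
    have : ∀ j ∈ range p, (∑ i ∈ range n, 1 / A (j * n + i)) - ∑ i ∈ range n, 1 / A i
        = ∑ i ∈ range n, (1 / A (j * n + i) - 1 / A i) := by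
      intro j _
      rw [Finset.sum_sub_distrib]
    rw [Finset.sum_congr rfl this]
    have : ∀ j ∈ range p, ∑ i ∈ range n, (1 / A (j * n + i) - 1 / A i)
        = ∑ i ∈ range n, (-((j : ℚ) * (c * (1 / (A i) ^ 2)))
            + (j : ℚ) ^ 2 * c ^ 2 / ((A i) ^ 2 * A (j * n + i))) := by
      intro j _
      exact Finset.sum_congr rfl fun i _ => hterm j i
    rw [Finset.sum_congr rfl this]
    have hGW : G * (c * W) = ∑ j ∈ range p, ∑ i ∈ range n,
        (j : ℚ) * (c * (1 / (A i) ^ 2)) := by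
      rw [hG, hW, Finset.mul_sum, Finset.sum_mul_sum]
    rw [hGW]
    simp only [Finset.sum_add_distrib, Finset.sum_neg_distrib]
    rfl
  -- norm bounds
  have hnormG : padicNorm p G ≤ (p : ℚ) ^ (-(1 : ℤ)) := by
    have hGeq : G = ((((∑ j ∈ range p, j : ℕ) : ℤ)) : ℚ) := by
      rw [hG]; push_cast; rfl
    have h2 : (∑ j ∈ range p, j) * 2 = p * (p - 1) := Finset.sum_range_id_mul_two p
    have hdvd2 : p ∣ (∑ j ∈ range p, j) * 2 := ⟨p - 1, h2⟩
    have hcop : Nat.Coprime p 2 := by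
      rcases hpodd with ⟨k, hk⟩
      have : p ≠ 2 := by omega
      exact (Nat.coprime_primes hp Nat.prime_two).2 this
    have hd := hcop.dvd_of_dvd_mul_right hdvd2
    have hdz : ((p ^ 1 : ℕ) : ℤ) ∣ ((∑ j ∈ range p, j : ℕ) : ℤ) := by
      exact_mod_cast Int.natCast_dvd_natCast.2 (by simpa using hd)
    have hle := (padicNorm.dvd_iff_norm_le (p := p)).1 hdz
    rw [hGeq]
    simpa using hle
  have hnormc : padicNorm p c ≤ (p : ℚ) ^ (-(r : ℤ)) := by
    have hceq : c = (((u * p ^ r : ℕ) : ℤ) : ℚ) := by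
      rw [hc, hn]
      conv_rhs => rw [← Nat.sub_add_cancel hr]
      push_cast
      rw [pow_succ]
      ring
    have hdz : ((p ^ r : ℕ) : ℤ) ∣ ((u * p ^ r : ℕ) : ℤ) :=
      Int.natCast_dvd_natCast.2 ⟨u, by ring⟩
    have hle := (padicNorm.dvd_iff_norm_le (p := p)).1 hdz
    rw [hceq]
    simpa using hle
  have hA2 : ∀ i : ℕ, padicNorm p ((A i) ^ 2) = 1 := by
    intro i
    rw [sq, padicNorm.mul, hA, mul_one]
  have hnormW1 : padicNorm p W ≤ (p : ℚ) ^ (-(0 : ℤ)) := by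
    simp only [neg_zero, zpow_zero]
    apply padicNorm.sum_le' _ zero_le_one
    intro i _
    rw [padicNorm.div, hA2, padicNorm.one, div_one]
  -- Y bound
  have hnormY : padicNorm p Y ≤ (p : ℚ) ^ (-(2 * r : ℤ)) := by
    apply padicNorm.sum_le' _ (by positivity)
    intro j _
    apply padicNorm.sum_le' _ (by positivity)
    intro i _
    have heq : (j : ℚ) ^ 2 * c ^ 2 / ((A i) ^ 2 * A (j * n + i))
        = (c ^ 2) * ((j : ℚ) ^ 2 / ((A i) ^ 2 * A (j * n + i))) := by ring
    rw [heq]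
    have h1 : padicNorm p (c ^ 2) ≤ (p : ℚ) ^ (-(2 * r : ℤ)) := by
      rw [sq]
      have := hmul c c r r hnormc hnormc
      convert this using 2
      ring
    have h2 : padicNorm p ((j : ℚ) ^ 2 / ((A i) ^ 2 * A (j * n + i))) ≤ 1 := by
      rw [padicNorm.div, padicNorm.mul, hA2, hA, mul_one, div_one, sq, padicNorm.mul]
      calc padicNorm p ((j:ℚ)) * padicNorm p ((j:ℚ)) ≤ 1 * 1 := by
            apply mul_le_mul (padicNorm.of_nat j) (padicNorm.of_nat j)
              (padicNorm.nonneg _) zero_le_one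
        _ = 1 := by ring
    calc padicNorm p (c ^ 2 * ((j : ℚ) ^ 2 / ((A i) ^ 2 * A (j * n + i))))
        = padicNorm p (c ^ 2) * padicNorm p ((j : ℚ) ^ 2 / ((A i) ^ 2 * A (j * n + i))) :=
          padicNorm.mul _ _
      _ ≤ (p : ℚ) ^ (-(2 * r : ℤ)) * 1 := by
          apply mul_le_mul h1 h2 (padicNorm.nonneg _) (by positivity)
      _ = (p : ℚ) ^ (-(2 * r : ℤ)) := by ring
  -- s is a p-adic unit
  have hs0 : (s : ℚ) ≠ 0 := by
    intro h
    have : s = 0 := by exact_mod_cast h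
    exact hps (this ▸ dvd_zero (p : ℤ))
  have hsnorm : padicNorm p ((s : ℤ) : ℚ) = 1 := (padicNorm.int_eq_one_iff s).2 hps
  have hs2 : padicNorm p ((s : ℚ) ^ 2) = 1 := by
    rw [sq, padicNorm.mul, hsnorm, mul_one]
  -- the bound on W for r ≥ 2
  have hnormW2 : 2 ≤ r → padicNorm p W ≤ (p : ℚ) ^ (-(1 : ℤ)) := by
    intro hr2
    have hWsplit : W = (∑ i ∈ range n, (1 / (A i) ^ 2 - 1 / (s : ℚ) ^ 2))
        + (n : ℚ) * (1 / (s : ℚ) ^ 2) := by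
      rw [hW, Finset.sum_sub_distrib, Finset.sum_const, card_range, nsmul_eq_mul]
      ring
    rw [hWsplit]
    apply le_trans padicNorm.nonarchimedean
    apply max_le
    · apply padicNorm.sum_le' _ (by positivity)
      intro i _
      have h1 := hA0 i
      have hid : 1 / (A i) ^ 2 - 1 / (s : ℚ) ^ 2
          = q * ((-(i : ℚ)) * ((A i) + (s : ℚ)) / ((A i) ^ 2 * (s : ℚ) ^ 2)) := by
        simp only [hAdef] at h1 ⊢
        field_simp
        ring
      rw [hid]
      have hq : padicNorm p q ≤ (p : ℚ) ^ (-(1 : ℤ)) := by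
        rw [hqdef, padicNorm.padicNorm_p_of_prime, zpow_neg, zpow_one]
      have hAs : padicNorm p ((A i) + (s : ℚ)) ≤ 1 := by
        have : (A i) + (s : ℚ) = (((i : ℤ) * p + 2 * s : ℤ) : ℚ) := by
          simp only [hAdef]; push_cast; ring
        rw [this]
        exact padicNorm.of_int _
      have hrest : padicNorm p ((-(i : ℚ)) * ((A i) + (s : ℚ)) / ((A i) ^ 2 * (s : ℚ) ^ 2))
          ≤ 1 := by
        rw [padicNorm.div, padicNorm.mul ((A i) ^ 2), hA2, hs2, mul_one, div_one,
          padicNorm.mul, padicNorm.neg]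
        calc padicNorm p (i : ℚ) * padicNorm p ((A i) + (s : ℚ)) ≤ 1 * 1 :=
              mul_le_mul (padicNorm.of_nat i) hAs (padicNorm.nonneg _) zero_le_one
          _ = 1 := by ring
      calc padicNorm p (q * ((-(i : ℚ)) * ((A i) + (s : ℚ)) / ((A i) ^ 2 * (s : ℚ) ^ 2)))
          = padicNorm p q
            * padicNorm p ((-(i : ℚ)) * ((A i) + (s : ℚ)) / ((A i) ^ 2 * (s : ℚ) ^ 2)) :=
            padicNorm.mul _ _
        _ ≤ (p : ℚ) ^ (-(1 : ℤ)) * 1 :=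
            mul_le_mul hq hrest (padicNorm.nonneg _) (by positivity)
        _ = (p : ℚ) ^ (-(1 : ℤ)) := mul_one _
    · have hpn : p ∣ n := by
        rw [hn]
        exact Dvd.dvd.mul_left (dvd_pow_self p (by omega : r - 1 ≠ 0)) u
      have hdz : ((p ^ 1 : ℕ) : ℤ) ∣ ((n : ℕ) : ℤ) :=
        Int.natCast_dvd_natCast.2 (by simpa using hpn)
      have hle := (padicNorm.dvd_iff_norm_le (p := p)).1 hdz
      have h1s : padicNorm p (1 / (s : ℚ) ^ 2) = 1 := by
        rw [padicNorm.div, padicNorm.one, hs2]; norm_num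
      have heq : padicNorm p ((n : ℚ) * (1 / (s : ℚ) ^ 2)) = padicNorm p ((n : ℚ)) := by
        rw [padicNorm.mul, h1s, mul_one]
      rw [heq]
      simpa using hle
  -- final assembly
  apply num_dvd_of_norm_le p _ (r + min r 2) (by omega)
  rw [hD]
  apply le_trans padicNorm.nonarchimedean
  apply max_le
  · rw [padicNorm.neg]
    by_cases h2 : 2 ≤ r
    · have hWb := hnormW2 h2
      have hX := hmul G (c * W) 1 ((r : ℤ) + 1) hnormG (hmul c W (r : ℤ) 1 hnormc hWb)
      refine le_trans hX (hmono _ _ ?_)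
      have hm2 : min r 2 = 2 := min_eq_right h2
      rw [hm2]
      push_cast
      omega
    · have hX := hmul G (c * W) 1 ((r : ℤ) + 0) hnormG (hmul c W (r : ℤ) 0 hnormc hnormW1)
      refine le_trans hX (hmono _ _ ?_)
      have hm1 : min r 2 = r := min_eq_left (by omega)
      rw [hm1]
      push_cast
      omega
  · refine le_trans hnormY (hmono _ _ ?_)
    have hmr := min_le_left r 2
    push_cast
    omega

/-- **Lemma 2.3(a).** `U(s;u,p²) ≡ p·U(s;u,p) (mod p²)`, and for `r ≥ 2`,
`U(s;u,p^{r+1}) ≡ p·U(s;u,p^r) (mod p^{r+2})`. -/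
theorem U_step_congruence
    (p u : ℕ) (s : ℤ)
    (hp : p.Prime) (hpodd : Odd p) (hu : 0 < u) (hps : ¬ (p : ℤ) ∣ s) :
    (p : ℤ) ^ 2 ∣ (U p s u 2 - (p : ℚ) * U p s u 1).num ∧
    ∀ r : ℕ, 2 ≤ r →
      (p : ℤ) ^ (r + 2) ∣ (U p s u (r + 1) - (p : ℚ) * U p s u r).num := by
  constructor
  · have h := key_congruence p u s hp hpodd hu hps 1 le_rfl
    norm_num at h
    exact h
  · intro r hr
    have h := key_congruence p u s hp hpodd hu hps r (by omega)
    rwa [min_eq_right hr] at h
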